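/- (General strong maximum principle) Assume in addition that (X,d) is locally compact and σ-compact and that μ is finite on compact sets. Let U : X → ℝ be measurable and let v ∈ D(I) satisfy v ≥ 0 μ-a.e., U₊·min{v,1} integrable on every compact subset of X (U₊ := max(U,0)), and I[φ,v] + ∫_X φ U v dμ ≥ 0 for every 0 ≤ φ ∈ D(I) with compact support (the integral being assumed to exist in (−∞, +∞]). Then either v = 0 μ-a.e. on X or v > 0 μ-a.e. on X. -/

import Mathlib

open MeasureTheory Real Filter
open scoped ENNReal Topology

noncomputable section

variable {X : Type*}

/-- The quadratic form `I[w] = (1/2)∬ k(x,y)(w(x)-w(y))² dμ dμ`, as an extended real. -/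
def formI [MeasurableSpace X] (μ : Measure X) (k : X → X → ℝ≥0∞) (w : X → ℝ) : ℝ≥0∞ :=
  (1 / 2 : ℝ≥0∞) *
    ∫⁻ p : X × X, k p.1 p.2 * ENNReal.ofReal ((w p.1 - w p.2) ^ 2) ∂(μ.prod μ)

/-- The form domain `D(I)`. -/
def memDI [MeasurableSpace X] (μ : Measure X) (k : X → X → ℝ≥0∞) (w : X → ℝ) : Prop :=
  Measurable w ∧ formI μ k w < ⊤

/-- The bilinear form `I[v,w]`. -/
def formI₂ [MeasurableSpace X] (μ : Measure X) (k : X → X → ℝ≥0∞) (v w : X → ℝ) : ℝ :=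
  (1 / 2) *
    ∫ p : X × X, (k p.1 p.2).toReal * (v p.1 - v p.2) * (w p.1 - w p.2) ∂(μ.prod μ)

private lemma integrable_of_le_lintegral {α : Type*} [MeasurableSpace α] {μ : Measure α}
    {f : α → ℝ} {g : α → ℝ≥0∞} (hf : Measurable f)
    (hfg : ∀ a, ENNReal.ofReal |f a| ≤ g a) (hg : ∫⁻ a, g a ∂μ ≠ ⊤) : Integrable f μ := by
  refine ⟨hf.aestronglyMeasurable, ?_⟩
  rw [hasFiniteIntegral_iff_norm]
  refine lt_of_le_of_lt (lintegral_mono fun a => ?_) hg.lt_top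
  simpa [Real.norm_eq_abs] using hfg a

private lemma ofReal_toReal_mul_le (a : ℝ≥0∞) (s : ℝ) :
    ENNReal.ofReal (a.toReal * s) ≤ a * ENNReal.ofReal s := by
  rw [ENNReal.ofReal_mul ENNReal.toReal_nonneg]
  exact mul_le_mul_left ENNReal.ofReal_toReal_le _

set_option maxHeartbeats 2000000 in
/-- general strong maximum principle. -/
theorem general_strong_maximum_principle [MetricSpace X] [MeasurableSpace X] [BorelSpace X]
    [LocallyCompactSpace X] [SigmaCompactSpace X]
    (μ : Measure X) [SigmaFinite μ] [IsFiniteMeasureOnCompacts μ]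
    (k : X → X → ℝ≥0∞) (hkmeas : Measurable (Function.uncurry k))
    (hkpos : ∀ x y, 0 < k x y) (hksymm : ∀ x y, k x y = k y x)
    (hk : ∀ K : Set X, IsCompact K →
      ∫⁻ p in K ×ˢ (Set.univ : Set X),
          k p.1 p.2 * ENNReal.ofReal (dist p.1 p.2 ^ 2) ∂(μ.prod μ) < ⊤)
    (U : X → ℝ) (hU : Measurable U)
    (v : X → ℝ) (hv : memDI μ k v) (hv0 : ∀ᵐ x ∂μ, 0 ≤ v x)
    (hUloc : ∀ K : Set X, IsCompact K →
      IntegrableOn (fun x => max (U x) 0 * min (v x) 1) K μ)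
    (hineq : ∀ φ : X → ℝ, memDI μ k φ → (∀ x, 0 ≤ φ x) → HasCompactSupport φ →
      Integrable (fun x => min (φ x * U x * v x) 0) μ ∧
        (Integrable (fun x => φ x * U x * v x) μ →
          0 ≤ formI₂ μ k φ v + ∫ x, φ x * U x * v x ∂μ)) :
    (∀ᵐ x ∂μ, v x = 0) ∨ (∀ᵐ x ∂μ, 0 < v x) := by
  classical
  by_contra hcon
  push_neg at hcon
  obtain ⟨h1, h2⟩ := hcon
  have hkm : Measurable fun p : X × X => k p.1 p.2 := hkmeas
  have hvm : Measurable v := hv.1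
  -- the set where v is negative is null
  have hneg : μ {x | v x < 0} = 0 := by
    have h := hv0
    rw [ae_iff] at h
    simpa [not_le] using h
  -- both {v = 0} and {v > 0} have positive measure
  have hA : μ {x | v x = 0} ≠ 0 := by
    intro h0
    apply h2
    rw [ae_iff]
    simp only [not_not, ← not_lt]
    have hsub : {x | ¬0 < v x} ⊆ {x | v x = 0} ∪ {x | v x < 0} := by
      intro x hx
      rcases lt_or_eq_of_le (not_lt.1 hx) with h | h
      · exact Or.inr h
      · exact Or.inl h
    refine le_antisymm ?_ zero_le
    calc μ {x | ¬0 < v x} ≤ μ ({x | v x = 0} ∪ {x | v x < 0}) := measure_mono hsub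
      _ ≤ μ {x | v x = 0} + μ {x | v x < 0} := measure_union_le _ _
      _ = 0 := by rw [h0, hneg, add_zero]
  have hB : μ {x | 0 < v x} ≠ 0 := by
    intro h0
    apply h1
    rw [ae_iff]
    simp only [not_not]
    have hsub : {x | ¬v x = 0} ⊆ {x | 0 < v x} ∪ {x | v x < 0} := by
      intro x hx
      rcases lt_trichotomy (v x) 0 with h | h | h
      · exact Or.inr h
      · exact absurd h hx
      · exact Or.inl h
    refine le_antisymm ?_ zero_le
    calc μ {x | ¬v x = 0} ≤ μ ({x | 0 < v x} ∪ {x | v x < 0}) := measure_mono hsub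
      _ ≤ μ {x | 0 < v x} + μ {x | v x < 0} := measure_union_le _ _
      _ = 0 := by rw [h0, hneg, add_zero]
  -- choose compact pieces of positive measure
  have hcov : ∀ T : Set X, μ T ≠ 0 → ∃ n, μ (T ∩ compactCovering X n) ≠ 0 := by
    intro T hT
    by_contra hall
    push_neg at hall
    apply hT
    have hTeq : T = ⋃ n, T ∩ compactCovering X n := by
      rw [← Set.inter_iUnion, iUnion_compactCovering, Set.inter_univ]
    rw [hTeq]
    exact measure_iUnion_null hall
  obtain ⟨n₁, hS0⟩ := hcov _ hA
  obtain ⟨n₂, hB0⟩ := hcov _ hB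
  set K₁ : Set X := compactCovering X n₁ with hK₁def
  have hK₁c : IsCompact K₁ := isCompact_compactCovering X n₁
  have hK₂c : IsCompact (compactCovering X n₂) := isCompact_compactCovering X n₂
  set S : Set X := {x | v x = 0} ∩ K₁ with hSdef
  set Bs : Set X := {x | 0 < v x} ∩ compactCovering X n₂ with hBdef
  have hSmeas : MeasurableSet S :=
    (hvm (measurableSet_singleton (0 : ℝ))).inter hK₁c.isClosed.measurableSet
  have hBmeas : MeasurableSet Bs := (hvm measurableSet_Ioi).inter hK₂c.isClosed.measurableSet
  have hSfin : μ S ≠ ⊤ :=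
    (lt_of_le_of_lt (measure_mono Set.inter_subset_right) hK₁c.measure_lt_top).ne
  have hBfin : μ Bs ≠ ⊤ :=
    (lt_of_le_of_lt (measure_mono Set.inter_subset_right) hK₂c.measure_lt_top).ne
  have hSv : ∀ x ∈ S, v x = 0 := fun x hx => hx.1
  have hBv : ∀ x ∈ Bs, 0 < v x := fun x hx => hx.1
  have hK₁ne : K₁.Nonempty := by
    obtain ⟨x, hx⟩ := nonempty_of_measure_ne_zero hS0
    exact ⟨x, hx.2⟩
  -- construct a Lipschitz bump function
  obtain ⟨K', hK'c, hKint⟩ := exists_compact_superset hK₁c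
  obtain ⟨r, hr0, hthick⟩ := hK₁c.exists_thickening_subset_open isOpen_interior hKint
  have hK'meas : MeasurableSet K' := hK'c.isClosed.measurableSet
  set φ : X → ℝ := fun x => max 0 (1 - r⁻¹ * Metric.infDist x K₁) with hφdef
  have hφ0 : ∀ x, 0 ≤ φ x := fun x => le_max_left _ _
  have hφ1 : ∀ x, φ x ≤ 1 := by
    intro x
    have h : 0 ≤ r⁻¹ * Metric.infDist x K₁ :=
      mul_nonneg (inv_nonneg.2 hr0.le) Metric.infDist_nonneg
    exact max_le (by norm_num) (by linarith)
  have hφone : ∀ x ∈ K₁, φ x = 1 := by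
    intro x hx
    simp [hφdef, Metric.infDist_zero_of_mem hx]
  have hφK' : ∀ x, φ x ≠ 0 → x ∈ K' := by
    intro x hx
    have hpos : 0 < φ x := lt_of_le_of_ne (hφ0 x) (Ne.symm hx)
    have ht : 0 < 1 - r⁻¹ * Metric.infDist x K₁ := by
      rcases lt_max_iff.1 hpos with h | h
      · exact absurd h (lt_irrefl 0)
      · exact h
    have h2 : r⁻¹ * Metric.infDist x K₁ < 1 := by linarith
    have hd : Metric.infDist x K₁ < r := by
      calc Metric.infDist x K₁ = r * (r⁻¹ * Metric.infDist x K₁) := by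
            field_simp
        _ < r * 1 := mul_lt_mul_of_pos_left h2 hr0
        _ = r := mul_one r
    have : x ∈ Metric.thickening r K₁ := (Metric.mem_thickening_iff_infDist_lt hK₁ne).2 hd
    exact interior_subset (hthick this)
  have hφcont : Continuous φ :=
    continuous_const.max (continuous_const.sub (continuous_const.mul
      (Metric.continuous_infDist_pt K₁)))
  have hφmeas : Measurable φ := hφcont.measurable
  have hφCS : HasCompactSupport φ := HasCompactSupport.intro hK'c fun x hx => by
    by_contra h
    exact hx (hφK' x h)
  have hφlip : ∀ x y : X, |φ x - φ y| ≤ r⁻¹ * dist x y := by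
    intro x y
    have hd : |Metric.infDist x K₁ - Metric.infDist y K₁| ≤ dist x y := by
      have h := (Metric.lipschitz_infDist_pt K₁).dist_le_mul x y
      rw [Real.dist_eq] at h
      simpa using h
    calc |φ x - φ y|
        ≤ |(1 - r⁻¹ * Metric.infDist x K₁) - (1 - r⁻¹ * Metric.infDist y K₁)| := by
          simpa [hφdef, max_comm] using
            abs_max_sub_max_le_abs (1 - r⁻¹ * Metric.infDist x K₁)
              (1 - r⁻¹ * Metric.infDist y K₁) 0
      _ = r⁻¹ * |Metric.infDist x K₁ - Metric.infDist y K₁| := by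
          rw [show (1 - r⁻¹ * Metric.infDist x K₁) - (1 - r⁻¹ * Metric.infDist y K₁)
              = r⁻¹ * (Metric.infDist y K₁ - Metric.infDist x K₁) by ring,
            abs_mul, abs_of_nonneg (inv_nonneg.2 hr0.le), abs_sub_comm]
      _ ≤ r⁻¹ * dist x y := by
          exact mul_le_mul_of_nonneg_left hd (inv_nonneg.2 hr0.le)
  -- the truncation functions
  set g : ℕ → X → ℝ := fun n x => max 0 (min (1 - ((n : ℝ) + 1) * v x) 1) with hgdef
  have hg0 : ∀ n x, 0 ≤ g n x := fun n x => le_max_left _ _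
  have hg1 : ∀ n x, g n x ≤ 1 := fun n x => max_le (by norm_num) (min_le_right _ _)
  have hgmeas : ∀ n, Measurable (g n) := fun n =>
    measurable_const.max ((measurable_const.sub (measurable_const.mul hvm)).min measurable_const)
  have hgv0 : ∀ n x, v x = 0 → g n x = 1 := by
    intro n x hx
    simp [hgdef, hx]
  have hganti : ∀ n (x y : X), v x ≤ v y → g n y ≤ g n x := by
    intro n x y hxy
    have : (1 : ℝ) - ((n : ℝ) + 1) * v y ≤ 1 - ((n : ℝ) + 1) * v x := by nlinarith
    exact max_le_max le_rfl (min_le_min this le_rfl)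
  have hglip : ∀ n (x y : X), |g n x - g n y| ≤ ((n : ℝ) + 1) * |v x - v y| := by
    intro n x y
    calc |g n x - g n y|
        ≤ |min (1 - ((n : ℝ) + 1) * v x) 1 - min (1 - ((n : ℝ) + 1) * v y) 1| := by
          simpa [hgdef, max_comm] using
            abs_max_sub_max_le_abs (min (1 - ((n : ℝ) + 1) * v x) 1)
              (min (1 - ((n : ℝ) + 1) * v y) 1) 0
      _ ≤ max |(1 - ((n : ℝ) + 1) * v x) - (1 - ((n : ℝ) + 1) * v y)| |(1 : ℝ) - 1| :=
          abs_min_sub_min_le_max _ _ _ _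
      _ ≤ ((n : ℝ) + 1) * |v x - v y| := by
          rw [show (1 - ((n : ℝ) + 1) * v x) - (1 - ((n : ℝ) + 1) * v y)
              = ((n : ℝ) + 1) * (v y - v x) by ring, abs_mul,
            abs_of_nonneg (by positivity : (0:ℝ) ≤ (n : ℝ) + 1), abs_sub_comm]
          simp only [sub_self, abs_zero]
          exact max_le le_rfl (by positivity)
  have hgsupp : ∀ n x, g n x ≠ 0 → ((n : ℝ) + 1) * v x < 1 := by
    intro n x hx
    by_contra hge
    push_neg at hge
    apply hx
    have hmin : min (1 - ((n : ℝ) + 1) * v x) 1 ≤ 0 :=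
      le_trans (min_le_left _ _) (by linarith)
    exact max_eq_left hmin
  set Φ : ℕ → X → ℝ := fun n x => φ x * g n x with hΦdef
  have hΦ0 : ∀ n x, 0 ≤ Φ n x := fun n x => mul_nonneg (hφ0 x) (hg0 n x)
  have hΦle : ∀ n x, Φ n x ≤ φ x := fun n x => by
    calc φ x * g n x ≤ φ x * 1 := mul_le_mul_of_nonneg_left (hg1 n x) (hφ0 x)
      _ = φ x := mul_one _
  have hΦ1 : ∀ n x, Φ n x ≤ 1 := fun n x => le_trans (hΦle n x) (hφ1 x)
  have hΦmeas : ∀ n, Measurable (Φ n) := fun n => hφmeas.mul (hgmeas n)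
  have hΦCS : ∀ n, HasCompactSupport (Φ n) := fun n =>
    HasCompactSupport.intro hK'c fun x hx => by
      have hz : φ x = 0 := by
        by_contra h
        exact hx (hφK' x h)
      simp [hΦdef, hz]
  -- finiteness of the relevant lintegrals
  have hQ : ∫⁻ p : X × X, k p.1 p.2 * ENNReal.ofReal ((v p.1 - v p.2) ^ 2) ∂(μ.prod μ) ≠ ⊤ := by
    intro hQt
    have h := hv.2
    rw [formI, hQt, ENNReal.mul_top (by norm_num : (1/2 : ℝ≥0∞) ≠ 0)] at h
    exact (lt_irrefl _ h)
  have hQmeas : Measurable fun p : X × X => k p.1 p.2 * ENNReal.ofReal ((v p.1 - v p.2) ^ 2) :=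
    hkm.mul (((hvm.comp measurable_fst).sub (hvm.comp measurable_snd)).pow_const 2).ennreal_ofReal
  -- the distance-squared integral over pairs touching K'
  set W : Set (X × X) := (K' ×ˢ (Set.univ : Set X)) ∪ ((Set.univ : Set X) ×ˢ K') with hWdef
  have hWmeas : MeasurableSet W :=
    (hK'meas.prod MeasurableSet.univ).union (MeasurableSet.univ.prod hK'meas)
  have hdmeas : Measurable fun p : X × X => k p.1 p.2 * ENNReal.ofReal (dist p.1 p.2 ^ 2) :=
    hkm.mul ((continuous_dist.measurable.pow_const 2).ennreal_ofReal)
  have hswap : ∫⁻ p in ((Set.univ : Set X) ×ˢ K'), k p.1 p.2 * ENNReal.ofReal (dist p.1 p.2 ^ 2) ∂(μ.prod μ)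
      = ∫⁻ p in (K' ×ˢ (Set.univ : Set X)), k p.1 p.2 * ENNReal.ofReal (dist p.1 p.2 ^ 2) ∂(μ.prod μ) := by
    rw [← lintegral_indicator (MeasurableSet.univ.prod hK'meas),
      ← lintegral_indicator (hK'meas.prod MeasurableSet.univ)]
    rw [← lintegral_prod_swap]
    refine lintegral_congr fun p => ?_
    rcases p with ⟨x, y⟩
    simp only [Prod.swap_prod_mk]
    by_cases hx : x ∈ K'
    · rw [Set.indicator_of_mem (by exact ⟨Set.mem_univ _, hx⟩ : ((y, x) : X × X) ∈ (Set.univ : Set X) ×ˢ K'),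
        Set.indicator_of_mem (by exact ⟨hx, Set.mem_univ _⟩ : ((x, y) : X × X) ∈ K' ×ˢ (Set.univ : Set X))]
      simp only []
      rw [hksymm y x, dist_comm y x]
    · rw [Set.indicator_of_notMem (fun h => hx h.2),
        Set.indicator_of_notMem (fun h => hx h.1)]
  have hWfin : ∫⁻ p in W, k p.1 p.2 * ENNReal.ofReal (dist p.1 p.2 ^ 2) ∂(μ.prod μ) ≠ ⊤ := by
    refine (lt_of_le_of_lt (lintegral_union_le _ _ _) ?_).ne
    rw [hswap]
    exact ENNReal.add_lt_top.2 ⟨hk K' hK'c, hk K' hK'c⟩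
  have hφfin : ∫⁻ p : X × X, k p.1 p.2 * ENNReal.ofReal ((φ p.1 - φ p.2) ^ 2) ∂(μ.prod μ) ≠ ⊤ := by
    have hb : ∀ p : X × X, k p.1 p.2 * ENNReal.ofReal ((φ p.1 - φ p.2) ^ 2)
        ≤ ENNReal.ofReal (r⁻¹ ^ 2) *
          W.indicator (fun p => k p.1 p.2 * ENNReal.ofReal (dist p.1 p.2 ^ 2)) p := by
      intro p
      by_cases hp : p ∈ W
      · rw [Set.indicator_of_mem hp]
        have h1 : (φ p.1 - φ p.2) ^ 2 ≤ r⁻¹ ^ 2 * dist p.1 p.2 ^ 2 := by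
          have h := hφlip p.1 p.2
          have h2 := abs_nonneg (φ p.1 - φ p.2)
          nlinarith [sq_abs (φ p.1 - φ p.2)]
        calc k p.1 p.2 * ENNReal.ofReal ((φ p.1 - φ p.2) ^ 2)
            ≤ k p.1 p.2 * ENNReal.ofReal (r⁻¹ ^ 2 * dist p.1 p.2 ^ 2) := by
              exact mul_le_mul_right (ENNReal.ofReal_le_ofReal h1) _
          _ = ENNReal.ofReal (r⁻¹ ^ 2) * (k p.1 p.2 * ENNReal.ofReal (dist p.1 p.2 ^ 2)) := by
              rw [ENNReal.ofReal_mul (by positivity)]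
              ring
      · rw [Set.indicator_of_notMem hp, mul_zero]
        have hp1 : φ p.1 = 0 := by
          by_contra h
          exact hp (Or.inl ⟨hφK' _ h, Set.mem_univ _⟩)
        have hp2 : φ p.2 = 0 := by
          by_contra h
          exact hp (Or.inr ⟨Set.mem_univ _, hφK' _ h⟩)
        simp [hp1, hp2]
    refine ne_top_of_le_ne_top ?_ (lintegral_mono hb)
    rw [lintegral_const_mul _ (hdmeas.indicator hWmeas), lintegral_indicator hWmeas]
    exact ENNReal.mul_ne_top ENNReal.ofReal_ne_top hWfin
  have hφmeas2 : Measurable fun p : X × X => k p.1 p.2 * ENNReal.ofReal ((φ p.1 - φ p.2) ^ 2) :=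
    hkm.mul (((hφmeas.comp measurable_fst).sub (hφmeas.comp measurable_snd)).pow_const 2).ennreal_ofReal
  -- each Φ n lies in the form domain
  have hΦdiff : ∀ n (x y : X),
      (Φ n x - Φ n y) ^ 2 ≤ 2 * (φ x - φ y) ^ 2 + 2 * (((n : ℝ) + 1) ^ 2 * (v x - v y) ^ 2) := by
    intro n x y
    have e1 : Φ n x - Φ n y = g n x * (φ x - φ y) + φ y * (g n x - g n y) := by
      simp only [hΦdef]
      ring
    have h1 : |Φ n x - Φ n y| ≤ |φ x - φ y| + |g n x - g n y| := by
      rw [e1]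
      calc |g n x * (φ x - φ y) + φ y * (g n x - g n y)|
          ≤ |g n x * (φ x - φ y)| + |φ y * (g n x - g n y)| := abs_add_le _ _
        _ = |g n x| * |φ x - φ y| + |φ y| * |g n x - g n y| := by rw [abs_mul, abs_mul]
        _ ≤ 1 * |φ x - φ y| + 1 * |g n x - g n y| := by
            apply add_le_add
            · exact mul_le_mul_of_nonneg_right
                (by rw [abs_of_nonneg (hg0 n x)]; exact hg1 n x) (abs_nonneg _)
            · exact mul_le_mul_of_nonneg_right
                (by rw [abs_of_nonneg (hφ0 y)]; exact hφ1 y) (abs_nonneg _)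
        _ = |φ x - φ y| + |g n x - g n y| := by ring
    have h2 := hglip n x y
    have h3 : |Φ n x - Φ n y| ≤ |φ x - φ y| + ((n : ℝ) + 1) * |v x - v y| := by linarith
    have h4 : |Φ n x - Φ n y| ^ 2 ≤ (|φ x - φ y| + ((n : ℝ) + 1) * |v x - v y|) ^ 2 :=
      pow_le_pow_left₀ (abs_nonneg _) h3 2
    nlinarith [h4, sq_abs (Φ n x - Φ n y), sq_abs (φ x - φ y), sq_abs (v x - v y),
      sq_nonneg (|φ x - φ y| - ((n : ℝ) + 1) * |v x - v y|)]
  have hΦfin : ∀ n,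
      ∫⁻ p : X × X, k p.1 p.2 * ENNReal.ofReal ((Φ n p.1 - Φ n p.2) ^ 2) ∂(μ.prod μ) ≠ ⊤ := by
    intro n
    have hb : ∀ p : X × X, k p.1 p.2 * ENNReal.ofReal ((Φ n p.1 - Φ n p.2) ^ 2)
        ≤ ENNReal.ofReal 2 * (k p.1 p.2 * ENNReal.ofReal ((φ p.1 - φ p.2) ^ 2))
          + ENNReal.ofReal (2 * ((n : ℝ) + 1) ^ 2) *
            (k p.1 p.2 * ENNReal.ofReal ((v p.1 - v p.2) ^ 2)) := by
      intro p
      calc k p.1 p.2 * ENNReal.ofReal ((Φ n p.1 - Φ n p.2) ^ 2)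
          ≤ k p.1 p.2 * ENNReal.ofReal
            (2 * (φ p.1 - φ p.2) ^ 2 + 2 * (((n : ℝ) + 1) ^ 2 * (v p.1 - v p.2) ^ 2)) :=
            mul_le_mul_right (ENNReal.ofReal_le_ofReal (hΦdiff n p.1 p.2)) _
        _ = k p.1 p.2 * (ENNReal.ofReal (2 * (φ p.1 - φ p.2) ^ 2)
            + ENNReal.ofReal (2 * ((n : ℝ) + 1) ^ 2 * (v p.1 - v p.2) ^ 2)) := by
            rw [← ENNReal.ofReal_add (by positivity) (by positivity)]
            ring_nf
        _ = ENNReal.ofReal 2 * (k p.1 p.2 * ENNReal.ofReal ((φ p.1 - φ p.2) ^ 2))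
            + ENNReal.ofReal (2 * ((n : ℝ) + 1) ^ 2) *
              (k p.1 p.2 * ENNReal.ofReal ((v p.1 - v p.2) ^ 2)) := by
            rw [mul_add, ENNReal.ofReal_mul (by positivity : (0:ℝ) ≤ 2),
              ENNReal.ofReal_mul (by positivity : (0:ℝ) ≤ 2 * ((n : ℝ) + 1) ^ 2)]
            ring
    refine ne_top_of_le_ne_top ?_ (lintegral_mono hb)
    rw [lintegral_add_left (by exact (measurable_const.mul hφmeas2)),
      lintegral_const_mul _ hφmeas2, lintegral_const_mul _ hQmeas]
    exact ENNReal.add_ne_top.2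
      ⟨ENNReal.mul_ne_top ENNReal.ofReal_ne_top hφfin,
        ENNReal.mul_ne_top ENNReal.ofReal_ne_top hQ⟩
  have hΦDI : ∀ n, memDI μ k (Φ n) := by
    intro n
    refine ⟨hΦmeas n, ?_⟩
    rw [formI, lt_top_iff_ne_top]
    exact ENNReal.mul_ne_top (by norm_num) (hΦfin n)
  have hφDI : memDI μ k φ := by
    refine ⟨hφmeas, ?_⟩
    rw [formI, lt_top_iff_ne_top]
    exact ENNReal.mul_ne_top (by norm_num) hφfin
  -- real-valued integrands
  set kR : X × X → ℝ := fun p => (k p.1 p.2).toReal with hkRdef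
  have hkRmeas : Measurable kR := hkm.ennreal_toReal
  have hkR0 : ∀ p, 0 ≤ kR p := fun p => ENNReal.toReal_nonneg
  set Fn : ℕ → X × X → ℝ :=
    fun n p => (k p.1 p.2).toReal * (Φ n p.1 - Φ n p.2) * (v p.1 - v p.2) with hFndef
  set Hf : X × X → ℝ :=
    fun p => (kR p * (φ p.1 - φ p.2) ^ 2 + kR p * (v p.1 - v p.2) ^ 2) / 2 with hHfdef
  set ψ : X → ℝ := fun x => if v x = 0 then φ x else 0 with hψdef
  set Fi : X × X → ℝ := fun p => kR p * (ψ p.1 - ψ p.2) * (v p.1 - v p.2) with hFidef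
  set Gf : X × X → ℝ :=
    (S ×ˢ Bs).indicator (fun p => min (kR p) 1 * min (v p.2) 1) with hGfdef
  have hHnn : ∀ p, 0 ≤ Hf p := fun p => by
    have := hkR0 p
    simp only [hHfdef]
    positivity
  have hGnn : ∀ p, 0 ≤ Gf p := by
    intro p
    simp only [hGfdef]
    apply Set.indicator_nonneg
    intro p hp
    have h1 : 0 ≤ min (kR p) 1 := le_min (hkR0 p) zero_le_one
    have h2 : 0 ≤ min (v p.2) 1 := le_min (hBv _ hp.2).le zero_le_one
    exact mul_nonneg h1 h2
  -- integrability
  have hint1 : Integrable (fun p => kR p * (v p.1 - v p.2) ^ 2) (μ.prod μ) := by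
    refine integrable_of_le_lintegral (hkRmeas.mul
      (((hvm.comp measurable_fst).sub (hvm.comp measurable_snd)).pow_const 2)) (fun p => ?_) hQ
    rw [abs_of_nonneg (mul_nonneg (hkR0 p) (sq_nonneg _))]
    exact ofReal_toReal_mul_le _ _
  have hint2 : Integrable (fun p => kR p * (φ p.1 - φ p.2) ^ 2) (μ.prod μ) := by
    refine integrable_of_le_lintegral (hkRmeas.mul
      (((hφmeas.comp measurable_fst).sub (hφmeas.comp measurable_snd)).pow_const 2)) (fun p => ?_) hφfin
    rw [abs_of_nonneg (mul_nonneg (hkR0 p) (sq_nonneg _))]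
    exact ofReal_toReal_mul_le _ _
  have hintH : Integrable Hf (μ.prod μ) := by
    have := (hint2.add hint1).div_const 2
    exact this
  have hintG : Integrable Gf (μ.prod μ) := by
    refine Integrable.mono' ((integrableOn_const (ne_of_lt ?_)).integrable_indicator
      (hSmeas.prod hBmeas) : Integrable ((S ×ˢ Bs).indicator fun _ => (1:ℝ)) (μ.prod μ))
      ?_ (ae_of_all _ fun p => ?_)
    · rw [Measure.prod_prod]
      exact ENNReal.mul_lt_top (lt_top_iff_ne_top.2 hSfin) (lt_top_iff_ne_top.2 hBfin)
    · exact ((hkRmeas.min measurable_const).mul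
        ((hvm.comp measurable_snd).min measurable_const)).indicator
        (hSmeas.prod hBmeas) |>.aestronglyMeasurable
    · simp only [hGfdef]
      by_cases hp : p ∈ S ×ˢ Bs
      · rw [Set.indicator_of_mem hp, Set.indicator_of_mem hp]
        rw [Real.norm_eq_abs, abs_of_nonneg (mul_nonneg (le_min (hkR0 p) zero_le_one)
          (le_min (hBv _ hp.2).le zero_le_one))]
        have h1 : min (kR p) 1 ≤ 1 := min_le_right _ _
        have h2 : min (v p.2) 1 ≤ 1 := min_le_right _ _
        nlinarith [le_min (hkR0 p) (zero_le_one' ℝ), le_min (hBv _ hp.2).le (zero_le_one' ℝ)]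
      · rw [Set.indicator_of_notMem hp, Set.indicator_of_notMem hp]
        simp
  have hFnmeas : ∀ n, Measurable (Fn n) := fun n =>
    (hkRmeas.mul (((hΦmeas n).comp measurable_fst).sub ((hΦmeas n).comp measurable_snd))).mul
      ((hvm.comp measurable_fst).sub (hvm.comp measurable_snd))
  have hintFn : ∀ n, Integrable (Fn n) (μ.prod μ) := by
    intro n
    refine Integrable.mono' (hint2.add ((hint1.const_mul (((n : ℝ) + 2)))))
      (hFnmeas n).aestronglyMeasurable (ae_of_all _ fun p => ?_)
    rw [Real.norm_eq_abs]
    have h1 : |Fn n p| ≤ kR p * ((|φ p.1 - φ p.2| + ((n:ℝ)+1) * |v p.1 - v p.2|) * |v p.1 - v p.2|) := by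
      simp only [hFndef]
      rw [abs_mul, abs_mul]
      have e1 : Φ n p.1 - Φ n p.2 = g n p.1 * (φ p.1 - φ p.2) + φ p.2 * (g n p.1 - g n p.2) := by
        simp only [hΦdef]; ring
      have h2 : |Φ n p.1 - Φ n p.2| ≤ |φ p.1 - φ p.2| + ((n:ℝ)+1) * |v p.1 - v p.2| := by
        rw [e1]
        calc |g n p.1 * (φ p.1 - φ p.2) + φ p.2 * (g n p.1 - g n p.2)|
            ≤ |g n p.1| * |φ p.1 - φ p.2| + |φ p.2| * |g n p.1 - g n p.2| := by
              refine le_trans (abs_add_le _ _) ?_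
              rw [abs_mul, abs_mul]
          _ ≤ 1 * |φ p.1 - φ p.2| + 1 * (((n:ℝ)+1) * |v p.1 - v p.2|) := by
              apply add_le_add
              · exact mul_le_mul (by rw [abs_of_nonneg (hg0 n p.1)]; exact hg1 n p.1) le_rfl
                  (abs_nonneg _) zero_le_one
              · exact mul_le_mul (by rw [abs_of_nonneg (hφ0 p.2)]; exact hφ1 p.2)
                  (hglip n p.1 p.2) (abs_nonneg _) zero_le_one
          _ = |φ p.1 - φ p.2| + ((n:ℝ)+1) * |v p.1 - v p.2| := by ring
      have hkabs : |(k p.1 p.2).toReal| = kR p := abs_of_nonneg (hkR0 p)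
      calc |(k p.1 p.2).toReal| * |Φ n p.1 - Φ n p.2| * |v p.1 - v p.2|
          ≤ |(k p.1 p.2).toReal| * (|φ p.1 - φ p.2| + ((n:ℝ)+1) * |v p.1 - v p.2|) * |v p.1 - v p.2| := by
            apply mul_le_mul_of_nonneg_right _ (abs_nonneg _)
            exact mul_le_mul_of_nonneg_left h2 (abs_nonneg _)
        _ = kR p * ((|φ p.1 - φ p.2| + ((n:ℝ)+1) * |v p.1 - v p.2|) * |v p.1 - v p.2|) := by
            rw [hkabs]; ring
    refine le_trans h1 ?_
    have hk0 := hkR0 p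
    have h3 : (|φ p.1 - φ p.2| + ((n:ℝ)+1) * |v p.1 - v p.2|) * |v p.1 - v p.2|
        ≤ (φ p.1 - φ p.2) ^ 2 + ((n : ℝ) + 2) * (v p.1 - v p.2) ^ 2 := by
      nlinarith [sq_abs (φ p.1 - φ p.2), sq_abs (v p.1 - v p.2),
        sq_nonneg (|φ p.1 - φ p.2| - |v p.1 - v p.2|), abs_nonneg (v p.1 - v p.2),
        abs_nonneg (φ p.1 - φ p.2), sq_nonneg (v p.1 - v p.2), Nat.cast_nonneg (α := ℝ) n]
    calc kR p * ((|φ p.1 - φ p.2| + ((n:ℝ)+1) * |v p.1 - v p.2|) * |v p.1 - v p.2|)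
        ≤ kR p * ((φ p.1 - φ p.2) ^ 2 + ((n : ℝ) + 2) * (v p.1 - v p.2) ^ 2) :=
          mul_le_mul_of_nonneg_left h3 hk0
      _ = kR p * (φ p.1 - φ p.2) ^ 2 + ((n : ℝ) + 2) * (kR p * (v p.1 - v p.2) ^ 2) := by ring
  -- positivity of the mass c
  set c : ℝ := ∫ p, Gf p ∂(μ.prod μ) with hcdef
  have hc : 0 < c := by
    rcases lt_or_ge 0 c with h | h
    · exact h
    exfalso
    have hc0 : c = 0 := le_antisymm h (integral_nonneg hGnn)
    have hG0 : Gf =ᵐ[μ.prod μ] 0 :=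
      (integral_eq_zero_iff_of_nonneg hGnn hintG).1 hc0
    have hklt : ∀ᵐ p ∂(μ.prod μ), k p.1 p.2 * ENNReal.ofReal ((v p.1 - v p.2) ^ 2) < ⊤ :=
      ae_lt_top hQmeas hQ
    have hout : ∀ᵐ p ∂(μ.prod μ), p ∉ S ×ˢ Bs := by
      filter_upwards [hG0, hklt] with p hg hk'
      intro hp
      have hv1 : v p.1 = 0 := hSv _ hp.1
      have hv2 : 0 < v p.2 := hBv _ hp.2
      have hsq : 0 < (v p.1 - v p.2) ^ 2 := by
        have h0 : v p.1 - v p.2 ≠ 0 := by rw [hv1]; intro hh; linarith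
        exact pow_two_pos_of_ne_zero h0
      have hktop : k p.1 p.2 ≠ ⊤ := by
        intro ht
        rw [ht, ENNReal.top_mul (by
          exact (ENNReal.ofReal_pos.2 hsq).ne' : ENNReal.ofReal ((v p.1 - v p.2) ^ 2) ≠ 0)] at hk'
        exact lt_irrefl _ hk'
      have hkR : 0 < kR p := ENNReal.toReal_pos (hkpos p.1 p.2).ne' hktop
      have hGp : Gf p = 0 := by simpa using hg
      have hind : Gf p = min (kR p) 1 * min (v p.2) 1 := Set.indicator_of_mem hp _
      have hpos : 0 < min (kR p) 1 * min (v p.2) 1 :=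
        mul_pos (lt_min hkR zero_lt_one) (lt_min hv2 zero_lt_one)
      rw [← hind, hGp] at hpos
      exact lt_irrefl _ hpos
    have hnull : (μ.prod μ) (S ×ˢ Bs) = 0 := by
      rw [ae_iff] at hout
      have heq : {p : X × X | ¬ p ∉ S ×ˢ Bs} = S ×ˢ Bs := by ext p; simp
      rw [← heq]
      exact hout
    rw [Measure.prod_prod] at hnull
    rcases mul_eq_zero.1 hnull with h' | h'
    · exact hS0 h'
    · exact hB0 h'
  -- a.e. nonnegativity on the product
  have hvv : ∀ᵐ p ∂(μ.prod μ), 0 ≤ v p.1 ∧ 0 ≤ v p.2 := by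
    have hm : MeasurableSet {x : X | v x < 0} := measurableSet_lt hvm measurable_const
    have e1 : (μ.prod μ) {p : X × X | v p.1 < 0} = 0 := by
      have : {p : X × X | v p.1 < 0} = {x : X | v x < 0} ×ˢ (Set.univ : Set X) := by
        ext p; simp
      rw [this, Measure.prod_prod, hneg, zero_mul]
    have e2 : (μ.prod μ) {p : X × X | v p.2 < 0} = 0 := by
      have : {p : X × X | v p.2 < 0} = (Set.univ : Set X) ×ˢ {x : X | v x < 0} := by
        ext p; simp
      rw [this, Measure.prod_prod, hneg, mul_zero]
    have a1 : ∀ᵐ p ∂(μ.prod μ), 0 ≤ v p.1 := by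
      rw [ae_iff]; simpa [not_le] using e1
    have a2 : ∀ᵐ p ∂(μ.prod μ), 0 ≤ v p.2 := by
      rw [ae_iff]; simpa [not_le] using e2
    exact a1.and a2
  -- pointwise inequality Fn ≤ Hf
  have hFnH : ∀ n p, 0 ≤ v p.1 → 0 ≤ v p.2 → Fn n p ≤ Hf p := by
    intro n p _ _
    have e1 : Fn n p = kR p * (g n p.1 * ((φ p.1 - φ p.2) * (v p.1 - v p.2)))
        + kR p * φ p.2 * ((g n p.1 - g n p.2) * (v p.1 - v p.2)) := by
      simp only [hFndef, hΦdef, hkRdef]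
      ring
    have e2 : kR p * φ p.2 * ((g n p.1 - g n p.2) * (v p.1 - v p.2)) ≤ 0 := by
      apply mul_nonpos_of_nonneg_of_nonpos (mul_nonneg (hkR0 p) (hφ0 p.2))
      rcases le_total (v p.1) (v p.2) with h | h
      · exact mul_nonpos_of_nonneg_of_nonpos (by linarith [hganti n p.1 p.2 h]) (by linarith)
      · exact mul_nonpos_of_nonpos_of_nonneg (by linarith [hganti n p.2 p.1 h]) (by linarith)
    have e3 : g n p.1 * ((φ p.1 - φ p.2) * (v p.1 - v p.2))
        ≤ ((φ p.1 - φ p.2) ^ 2 + (v p.1 - v p.2) ^ 2) / 2 := by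
      have h1 : g n p.1 * ((φ p.1 - φ p.2) * (v p.1 - v p.2))
          ≤ |(φ p.1 - φ p.2) * (v p.1 - v p.2)| := by
        rcases le_total 0 ((φ p.1 - φ p.2) * (v p.1 - v p.2)) with h | h
        · calc g n p.1 * ((φ p.1 - φ p.2) * (v p.1 - v p.2))
              ≤ 1 * ((φ p.1 - φ p.2) * (v p.1 - v p.2)) :=
                mul_le_mul_of_nonneg_right (hg1 n p.1) h
            _ = (φ p.1 - φ p.2) * (v p.1 - v p.2) := one_mul _
            _ ≤ |(φ p.1 - φ p.2) * (v p.1 - v p.2)| := le_abs_self _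
        · calc g n p.1 * ((φ p.1 - φ p.2) * (v p.1 - v p.2))
              ≤ 0 := mul_nonpos_of_nonneg_of_nonpos (hg0 n p.1) h
            _ ≤ |(φ p.1 - φ p.2) * (v p.1 - v p.2)| := abs_nonneg _
      refine le_trans h1 ?_
      rw [abs_mul]
      nlinarith [sq_abs (φ p.1 - φ p.2), sq_abs (v p.1 - v p.2),
        sq_nonneg (|φ p.1 - φ p.2| - |v p.1 - v p.2|)]
    have e4 : kR p * (g n p.1 * ((φ p.1 - φ p.2) * (v p.1 - v p.2))) ≤ Hf p := by
      have := mul_le_mul_of_nonneg_left e3 (hkR0 p)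
      simp only [hHfdef]
      calc kR p * (g n p.1 * ((φ p.1 - φ p.2) * (v p.1 - v p.2)))
          ≤ kR p * (((φ p.1 - φ p.2) ^ 2 + (v p.1 - v p.2) ^ 2) / 2) := this
        _ = (kR p * (φ p.1 - φ p.2) ^ 2 + kR p * (v p.1 - v p.2) ^ 2) / 2 := by ring
    linarith [e1, e2, e4]
  -- the limit function is dominated by -Gf
  have hFiG : ∀ p : X × X, 0 ≤ v p.1 → 0 ≤ v p.2 → Fi p ≤ -Gf p := by
    intro p hp1 hp2
    by_cases h1 : v p.1 = 0
    · by_cases h2 : v p.2 = 0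
      · have hout : p ∉ S ×ˢ Bs := fun hp => (lt_irrefl (0:ℝ)) (by
          have := hBv _ hp.2; rw [h2] at this; exact this)
        have : Gf p = 0 := Set.indicator_of_notMem hout _
        rw [this]
        simp only [hFidef]
        rw [h1, h2]
        simp
      · have hv2 : 0 < v p.2 := lt_of_le_of_ne hp2 (Ne.symm h2)
        have hψ1 : ψ p.1 = φ p.1 := if_pos h1
        have hψ2 : ψ p.2 = 0 := if_neg h2
        have hFi : Fi p = -(kR p * φ p.1 * v p.2) := by
          simp only [hFidef]
          rw [hψ1, hψ2, h1]
          ring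
        by_cases hp : p ∈ S ×ˢ Bs
        · have hGp : Gf p = min (kR p) 1 * min (v p.2) 1 := Set.indicator_of_mem hp _
          have hφ1' : φ p.1 = 1 := hφone _ hp.1.2
          rw [hFi, hGp, hφ1', mul_one]
          have hmin : min (kR p) 1 * min (v p.2) 1 ≤ kR p * v p.2 :=
            mul_le_mul (min_le_left _ _) (min_le_left _ _)
              (le_min hv2.le zero_le_one) (hkR0 p)
          linarith
        · have hGp : Gf p = 0 := Set.indicator_of_notMem hp _
          rw [hFi, hGp, neg_zero]
          have : 0 ≤ kR p * φ p.1 * v p.2 :=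
            mul_nonneg (mul_nonneg (hkR0 p) (hφ0 p.1)) hv2.le
          linarith
    · have hout : p ∉ S ×ˢ Bs := fun hp => h1 (hSv _ hp.1)
      have hGp : Gf p = 0 := Set.indicator_of_notMem hout _
      have hψ1 : ψ p.1 = 0 := if_neg h1
      rw [hGp, neg_zero]
      by_cases h2 : v p.2 = 0
      · have hψ2 : ψ p.2 = φ p.2 := if_pos h2
        have hv1 : 0 < v p.1 := lt_of_le_of_ne hp1 (Ne.symm h1)
        simp only [hFidef]
        rw [hψ1, hψ2, h2]
        have : 0 ≤ kR p * φ p.2 * v p.1 :=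
          mul_nonneg (mul_nonneg (hkR0 p) (hφ0 p.2)) hv1.le
        nlinarith
      · have hψ2 : ψ p.2 = 0 := if_neg h2
        simp only [hFidef]
        rw [hψ1, hψ2]
        simp
  -- pointwise convergence of Fn to Fi
  have hΦtend : ∀ x : X, 0 ≤ v x → Tendsto (fun n => Φ n x) atTop (𝓝 (ψ x)) := by
    intro x hx
    by_cases h0 : v x = 0
    · have : ∀ n, Φ n x = ψ x := by
        intro n
        simp only [hΦdef, hψdef]
        rw [if_pos h0, hgv0 n x h0, mul_one]
      simp only [this]
      exact tendsto_const_nhds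
    · have hvx : 0 < v x := lt_of_le_of_ne hx (Ne.symm h0)
      have hψx : ψ x = 0 := if_neg h0
      rw [hψx]
      have hev : ∀ᶠ n in atTop, Φ n x = 0 := by
        refine eventually_atTop.2 ⟨⌈(v x)⁻¹⌉₊, fun n hn => ?_⟩
        have h1 : (v x)⁻¹ ≤ (n : ℝ) := le_trans (Nat.le_ceil _) (Nat.cast_le.2 hn)
        have h2 : (1 : ℝ) ≤ ((n : ℝ) + 1) * v x := by
          have h3 : (v x)⁻¹ * v x ≤ ((n : ℝ) + 1) * v x :=
            mul_le_mul_of_nonneg_right (by linarith) hvx.le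
          rw [inv_mul_cancel₀ (ne_of_gt hvx)] at h3
          exact h3
        have hg' : g n x = 0 := by
          have hmin : min (1 - ((n : ℝ) + 1) * v x) 1 ≤ 0 :=
            le_trans (min_le_left _ _) (by linarith)
          exact max_eq_left hmin
        simp only [hΦdef]
        rw [hg', mul_zero]
      exact Tendsto.congr' (hev.mono fun n h => h.symm) tendsto_const_nhds
  have htend : ∀ p : X × X, 0 ≤ v p.1 → 0 ≤ v p.2 →
      Tendsto (fun n => Fn n p) atTop (𝓝 (Fi p)) := by
    intro p hp1 hp2
    have h1 := hΦtend p.1 hp1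
    have h2 := hΦtend p.2 hp2
    have : Tendsto (fun n => (k p.1 p.2).toReal * (Φ n p.1 - Φ n p.2) * (v p.1 - v p.2))
        atTop (𝓝 ((k p.1 p.2).toReal * (ψ p.1 - ψ p.2) * (v p.1 - v p.2))) :=
      (((h1.sub h2).const_mul _).mul_const _)
    exact this
  -- measurability of Hf
  have hHfmeas : Measurable Hf := by
    have m1 : Measurable fun p : X × X => kR p * (φ p.1 - φ p.2) ^ 2 :=
      hkRmeas.mul (((hφmeas.comp measurable_fst).sub (hφmeas.comp measurable_snd)).pow_const 2)
    have m2 : Measurable fun p : X × X => kR p * (v p.1 - v p.2) ^ 2 :=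
      hkRmeas.mul (((hvm.comp measurable_fst).sub (hvm.comp measurable_snd)).pow_const 2)
    exact (m1.add m2).div_const 2
  -- the Fatou argument
  have hHF : ∀ n, 0 ≤ᵐ[μ.prod μ] fun p => Hf p - Fn n p := by
    intro n
    filter_upwards [hvv] with p hp
    exact sub_nonneg.2 (hFnH n p hp.1 hp.2)
  have key1 : ∀ n, ∫⁻ p, ENNReal.ofReal (Hf p - Fn n p) ∂(μ.prod μ)
      = ENNReal.ofReal ((∫ p, Hf p ∂(μ.prod μ)) - ∫ p, Fn n p ∂(μ.prod μ)) := by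
    intro n
    rw [← integral_sub hintH (hintFn n)]
    exact (ofReal_integral_eq_lintegral_ofReal (hintH.sub (hintFn n)) (hHF n)).symm
  have key2 : ENNReal.ofReal ((∫ p, Hf p ∂(μ.prod μ)) + c)
      = ∫⁻ p, ENNReal.ofReal (Hf p + Gf p) ∂(μ.prod μ) := by
    rw [← integral_add hintH hintG]
    exact ofReal_integral_eq_lintegral_ofReal (hintH.add hintG)
      (ae_of_all _ fun p => add_nonneg (hHnn p) (hGnn p))
  have key3 : ∫⁻ p, ENNReal.ofReal (Hf p + Gf p) ∂(μ.prod μ)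
      ≤ ∫⁻ p, Filter.liminf (fun n => ENNReal.ofReal (Hf p - Fn n p)) atTop ∂(μ.prod μ) := by
    refine lintegral_mono_ae ?_
    filter_upwards [hvv] with p hp
    have ht : Tendsto (fun n => ENNReal.ofReal (Hf p - Fn n p)) atTop
        (𝓝 (ENNReal.ofReal (Hf p - Fi p))) :=
      ENNReal.tendsto_ofReal (tendsto_const_nhds.sub (htend p hp.1 hp.2))
    rw [ht.liminf_eq]
    exact ENNReal.ofReal_le_ofReal (by linarith [hFiG p hp.1 hp.2])
  have key4 : ∫⁻ p, Filter.liminf (fun n => ENNReal.ofReal (Hf p - Fn n p)) atTop ∂(μ.prod μ)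
      ≤ Filter.liminf (fun n => ∫⁻ p, ENNReal.ofReal (Hf p - Fn n p) ∂(μ.prod μ)) atTop :=
    lintegral_liminf_le fun n => (hHfmeas.sub (hFnmeas n)).ennreal_ofReal
  have hH0 : 0 ≤ ∫ p, Hf p ∂(μ.prod μ) := integral_nonneg hHnn
  have hliminf : ENNReal.ofReal ((∫ p, Hf p ∂(μ.prod μ)) + c)
      ≤ Filter.liminf (fun n =>
          ENNReal.ofReal ((∫ p, Hf p ∂(μ.prod μ)) - ∫ p, Fn n p ∂(μ.prod μ))) atTop := by
    rw [key2]
    refine le_trans key3 (le_trans key4 (le_of_eq ?_))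
    congr 1
    exact funext key1
  have hlt : ENNReal.ofReal ((∫ p, Hf p ∂(μ.prod μ)) + c / 2)
      < Filter.liminf (fun n =>
          ENNReal.ofReal ((∫ p, Hf p ∂(μ.prod μ)) - ∫ p, Fn n p ∂(μ.prod μ))) atTop := by
    refine lt_of_lt_of_le ?_ hliminf
    rw [ENNReal.ofReal_lt_ofReal_iff (by linarith)]
    linarith
  have hev1 : ∀ᶠ n in atTop, ∫ p, Fn n p ∂(μ.prod μ) < -(c / 2) := by
    filter_upwards [eventually_lt_of_lt_liminf hlt] with n hn
    have := (ENNReal.ofReal_lt_ofReal_iff_of_nonneg (by linarith)).1 hn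
    linarith
  -- dominated convergence for the zero-order term
  have hD1 : Integrable (K'.indicator fun x => max (U x) 0 * min (v x) 1) μ :=
    (hUloc K' hK'c).integrable_indicator hK'meas
  have hminφ : Integrable (fun x => min (φ x * U x * v x) 0) μ := (hineq φ hφDI hφ0 hφCS).1
  set D : X → ℝ := fun x =>
    K'.indicator (fun y => max (U y) 0 * min (v y) 1) x + |min (φ x * U x * v x) 0| with hDdef
  have hDint : Integrable D μ := hD1.add hminφ.abs
  have hbm : ∀ n, AEStronglyMeasurable (fun x => Φ n x * U x * v x) μ := fun n =>
    (((hΦmeas n).mul hU).mul hvm).aestronglyMeasurable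
  have hdom : ∀ n, ∀ᵐ x ∂μ, ‖Φ n x * U x * v x‖ ≤ D x := by
    intro n
    filter_upwards [hv0] with x hvx
    have hD1nn : 0 ≤ K'.indicator (fun y => max (U y) 0 * min (v y) 1) x := by
      by_cases hx : x ∈ K'
      · rw [Set.indicator_of_mem hx]
        exact mul_nonneg (le_max_right _ _) (le_min hvx zero_le_one)
      · rw [Set.indicator_of_notMem hx]
    have hD2nn : 0 ≤ |min (φ x * U x * v x) 0| := abs_nonneg _
    by_cases hz : Φ n x = 0
    · rw [hz]
      simp only [zero_mul, norm_zero, hDdef]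
      linarith
    · have hxne : φ x ≠ 0 ∧ g n x ≠ 0 := by
        have : φ x * g n x ≠ 0 := hz
        exact mul_ne_zero_iff.1 this
      have hK'x : x ∈ K' := hφK' x hxne.1
      have hvlt : v x < 1 := by
        have h := hgsupp n x hxne.2
        nlinarith [Nat.cast_nonneg (α := ℝ) n]
      rcases le_or_gt 0 (U x) with hU0 | hU0
      · have habs : ‖Φ n x * U x * v x‖ = Φ n x * U x * v x :=
          norm_of_nonneg (mul_nonneg (mul_nonneg (hΦ0 n x) hU0) hvx)
        have hle : Φ n x * U x * v x ≤ max (U x) 0 * min (v x) 1 := by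
          rw [max_eq_left hU0, min_eq_left hvlt.le]
          have h5 : Φ n x * (U x * v x) ≤ 1 * (U x * v x) :=
            mul_le_mul_of_nonneg_right (hΦ1 n x) (mul_nonneg hU0 hvx)
          nlinarith [h5]
        rw [habs]
        simp only [hDdef]
        rw [Set.indicator_of_mem hK'x]
        linarith
      · have hprod : Φ n x * U x * v x ≤ 0 :=
          mul_nonpos_of_nonpos_of_nonneg
            (mul_nonpos_of_nonneg_of_nonpos (hΦ0 n x) hU0.le) hvx
        have habs : ‖Φ n x * U x * v x‖ = -(Φ n x * U x * v x) := norm_of_nonpos hprod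
        have hφprod : φ x * U x * v x ≤ 0 :=
          mul_nonpos_of_nonpos_of_nonneg
            (mul_nonpos_of_nonneg_of_nonpos (hφ0 x) hU0.le) hvx
        have hle : -(Φ n x * U x * v x) ≤ -(φ x * U x * v x) := by
          have h5 : 0 ≤ (φ x - Φ n x) * (-U x) * v x :=
            mul_nonneg (mul_nonneg (sub_nonneg.2 (hΦle n x)) (neg_nonneg.2 hU0.le)) hvx
          nlinarith [h5]
        have heq : |min (φ x * U x * v x) 0| = -(φ x * U x * v x) := by
          rw [min_eq_left hφprod, abs_of_nonpos hφprod]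
        rw [habs]
        simp only [hDdef]
        rw [heq]
        linarith
  have hptlim : ∀ᵐ x ∂μ, Tendsto (fun n => Φ n x * U x * v x) atTop (𝓝 0) := by
    filter_upwards [hv0] with x hvx
    have hT : Tendsto (fun n => Φ n x * U x * v x) atTop (𝓝 (ψ x * U x * v x)) :=
      ((hΦtend x hvx).mul_const (U x)).mul_const (v x)
    have hzero : ψ x * U x * v x = 0 := by
      by_cases h0 : v x = 0
      · rw [h0, mul_zero]
      · rw [hψdef]
        simp only [if_neg h0]
        ring
    rwa [hzero] at hT
  have hUVtend : Tendsto (fun n => ∫ x, Φ n x * U x * v x ∂μ) atTop (𝓝 0) := by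
    have := tendsto_integral_of_dominated_convergence D hbm hDint hdom hptlim
    simpa using this
  have hev2 : ∀ᶠ n in atTop, ∫ x, Φ n x * U x * v x ∂μ < c / 4 :=
    hUVtend.eventually_lt_const (by linarith)
  obtain ⟨n, hn1, hn2⟩ := (hev1.and hev2).exists
  have hintn : Integrable (fun x => Φ n x * U x * v x) μ :=
    Integrable.mono' hDint (hbm n) (hdom n)
  have hfinal := (hineq (Φ n) (hΦDI n) (fun x => hΦ0 n x) (hΦCS n)).2 hintn
  have hform : formI₂ μ k (Φ n) v = (1 / 2 : ℝ) * ∫ p, Fn n p ∂(μ.prod μ) := rfl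
  rw [hform] at hfinal
  linarith [hn1, hn2, hfinal, hc]

end
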